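/- Let n ≥ 2 and let F ≠ 0 be a multilinear polynomial in ℂ[X_1,…,X_n] such that for every j ∈ {1,…,n} the variable X_j occurs in F but X_j does not divide F. If F splits across some nontrivial bipartition (E,E'), then the number t of monomials of F is composite: there exist t₁ ≥ 2 and t₂ ≥ 2 with t = t₁·t₂. -/

import Mathlib

open MvPolynomial Finset

/-- If a polynomial has a single monomial containing a variable `j`, then `X j` divides it. -/
lemma aux_card_ge_two {σ : Type*} [DecidableEq σ] (p : MvPolynomial σ ℂ) (hp : p ≠ 0)
    (j : σ) (hj : j ∈ p.vars) (hd : ¬ (X j ∣ p)) : 2 ≤ p.support.card := by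
  by_contra h
  push_neg at h
  have h1 : 1 ≤ p.support.card := Finset.card_pos.mpr (MvPolynomial.support_nonempty.mpr hp)
  have hc : p.support.card = 1 := le_antisymm (Nat.lt_succ_iff.mp h) h1
  obtain ⟨a, ha⟩ := Finset.card_eq_one.mp hc
  obtain ⟨d, hd', hjd⟩ := (MvPolynomial.mem_vars j).mp hj
  rw [ha, Finset.mem_singleton] at hd'
  subst hd'
  have hpm : p = monomial d (coeff d p) := by
    apply MvPolynomial.ext
    intro u
    rw [coeff_monomial]
    split_ifs with hu
    · rw [hu]
    · have : u ∉ p.support := by rw [ha, Finset.mem_singleton]; exact fun h' => hu h'.symm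
      simpa using this
  apply hd
  rw [hpm]
  rw [X_dvd_monomial]
  exact Or.inr (Finsupp.mem_support_iff.mp hjd)

lemma aux_card_mul {σ : Type*} [Fintype σ] [DecidableEq σ] (E : Finset σ) (p q : MvPolynomial σ ℂ)
    (hp : p.vars ⊆ E) (hq : q.vars ⊆ Eᶜ) :
    (p * q).support.card = p.support.card * q.support.card := by
  have hpE : ∀ a ∈ p.support, ∀ i, i ∉ E → a i = 0 := by
    intro a ha i hi
    by_contra h
    exact hi (hp ((MvPolynomial.mem_vars i).mpr ⟨a, ha, Finsupp.mem_support_iff.mpr h⟩))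
  have hqE : ∀ b ∈ q.support, ∀ i, i ∈ E → b i = 0 := by
    intro b hb i hi
    by_contra h
    have := hq ((MvPolynomial.mem_vars i).mpr ⟨b, hb, Finsupp.mem_support_iff.mpr h⟩)
    rw [Finset.mem_compl] at this
    exact this hi
  have key : ∀ a ∈ p.support, ∀ b ∈ q.support, ∀ c ∈ p.support, ∀ d ∈ q.support,
      a + b = c + d → a = c ∧ b = d := by
    intro a ha b hb c hc d hd habcd
    have h1 : a = c := by
      ext i
      by_cases hi : i ∈ E
      · have := DFunLike.congr_fun habcd i
        simpa [hqE b hb i hi, hqE d hd i hi] using this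
      · rw [hpE a ha i hi, hpE c hc i hi]
    have h2 : b = d := by
      ext i
      by_cases hi : i ∈ E
      · rw [hqE b hb i hi, hqE d hd i hi]
      · have := DFunLike.congr_fun habcd i
        simpa [hpE a ha i hi, hpE c hc i hi] using this
    exact ⟨h1, h2⟩
  have hcoeff : ∀ a ∈ p.support, ∀ b ∈ q.support,
      coeff (a + b) (p * q) = coeff a p * coeff b q := by
    intro a ha b hb
    rw [MvPolynomial.coeff_mul]
    apply Finset.sum_eq_single_of_mem (a, b) (Finset.HasAntidiagonal.mem_antidiagonal.mpr rfl)
    intro x hx hxne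
    rw [Finset.HasAntidiagonal.mem_antidiagonal] at hx
    by_contra h
    have hx1 : x.1 ∈ p.support := by
      rw [MvPolynomial.mem_support_iff]
      intro h0; exact h (by rw [h0, zero_mul])
    have hx2 : x.2 ∈ q.support := by
      rw [MvPolynomial.mem_support_iff]
      intro h0; exact h (by rw [h0, mul_zero])
    obtain ⟨e1, e2⟩ := key x.1 hx1 x.2 hx2 a ha b hb hx
    exact hxne (Prod.ext e1 e2)
  have himg : (p * q).support = (p.support ×ˢ q.support).image (fun x => x.1 + x.2) := by
    apply Finset.Subset.antisymm
    · intro u hu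
      have := MvPolynomial.support_mul p q hu
      rw [Finset.mem_add] at this
      obtain ⟨a, ha, b, hb, hab⟩ := this
      exact Finset.mem_image.mpr ⟨(a, b), Finset.mem_product.mpr ⟨ha, hb⟩, hab⟩
    · intro u hu
      obtain ⟨⟨a, b⟩, hab, habu⟩ := Finset.mem_image.mp hu
      obtain ⟨ha, hb⟩ := Finset.mem_product.mp hab
      rw [MvPolynomial.mem_support_iff]
      rw [← habu, hcoeff a ha b hb]
      exact mul_ne_zero (MvPolynomial.mem_support_iff.mp ha) (MvPolynomial.mem_support_iff.mp hb)
  rw [himg, Finset.card_image_of_injOn, Finset.card_product]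
  intro x hx y hy hxy
  rw [Finset.mem_coe, Finset.mem_product] at hx hy
  obtain ⟨e1, e2⟩ := key x.1 hx.1 x.2 hx.2 y.1 hy.1 y.2 hy.2 hxy
  exact Prod.ext e1 e2

/-- Theorem 2.1(ii)(c): for a nonzero multilinear polynomial `F`
in which every variable occurs but no variable is a factor, if `F` splits across
some nontrivial bipartition then its number of monomials is composite. -/
theorem stmt_1 (n : ℕ) (hn : 2 ≤ n) (F : MvPolynomial (Fin n) ℂ) (hF : F ≠ 0)
    (hml : ∀ j, F.degreeOf j ≤ 1)
    (hvars : ∀ j, j ∈ F.vars)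
    (hndvd : ∀ j, ¬ (X j ∣ F))
    (E : Finset (Fin n)) (hE : E.Nonempty) (hE' : E ≠ Finset.univ)
    (hsplit : ∃ p q : MvPolynomial (Fin n) ℂ, F = p * q ∧ p.vars ⊆ E ∧ q.vars ⊆ Eᶜ) :
    ∃ t₁ t₂ : ℕ, 2 ≤ t₁ ∧ 2 ≤ t₂ ∧ F.support.card = t₁ * t₂ := by
  obtain ⟨p, q, hpq, hpv, hqv⟩ := hsplit
  have hp0 : p ≠ 0 := by rintro rfl; exact hF (by rw [hpq, zero_mul])
  have hq0 : q ≠ 0 := by rintro rfl; exact hF (by rw [hpq, mul_zero])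
  -- pick j ∈ E, k ∉ E
  obtain ⟨j, hj⟩ := hE
  obtain ⟨k, hk⟩ : ∃ k, k ∉ E := by
    by_contra h
    push_neg at h
    exact hE' (Finset.eq_univ_iff_forall.mpr h)
  have hsub : F.vars ⊆ p.vars ∪ q.vars := by rw [hpq]; exact MvPolynomial.vars_mul p q
  have hjp : j ∈ p.vars := by
    have := hsub (hvars j)
    rcases Finset.mem_union.mp this with h | h
    · exact h
    · exact absurd hj (Finset.mem_compl.mp (hqv h))
  have hkq : k ∈ q.vars := by
    have := hsub (hvars k)
    rcases Finset.mem_union.mp this with h | h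
    · exact absurd (hpv h) hk
    · exact h
  have h1 : 2 ≤ p.support.card := by
    apply aux_card_ge_two p hp0 j hjp
    intro hdvd
    exact hndvd j (hpq ▸ Dvd.dvd.mul_right hdvd q)
  have h2 : 2 ≤ q.support.card := by
    apply aux_card_ge_two q hq0 k hkq
    intro hdvd
    exact hndvd k (hpq ▸ Dvd.dvd.mul_left hdvd p)
  exact ⟨p.support.card, q.support.card, h1, h2, by rw [hpq]; exact aux_card_mul E p q hpv hqv⟩
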